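/- Let σ₀ be a flipping cone in N_ℝ with data as above. Every point x ∈ σ₀ also lies in some cone σ_J with J₋ ⊄ J; that is, the collection Σ₊ = {σ_J : J₋ ⊄ J} covers σ₀. -/

import Mathlib

/-- The cone generated by the vectors `ν i` for `i ∈ J`, inside `ℝⁿ`
(the vectors live in the lattice `ℤⁿ`). -/
noncomputable def coneOf {n : ℕ} (ν : Fin (n+1) → (Fin n → ℤ))
    (J : Set (Fin (n+1))) : Set (Fin n → ℝ) :=
  {x | ∃ lam : Fin (n+1) → ℝ, (∀ i, 0 ≤ lam i) ∧ (∀ i, i ∉ J → lam i = 0) ∧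
    x = ∑ i, lam i • (fun j => (ν i j : ℝ))}

/-- STATEMENT 0: for a flipping cone `σ₀ = Cone(ν₁,…,ν_{n+1})` with wall relation
`∑ bᵢ νᵢ = 0`, every cone `σ_J` with `J₋ ⊄ J` is contained in `σ₀`, and the
collection `Σ₊ = {σ_J : J₋ ⊄ J}` covers `σ₀`. -/
theorem stmt1 {n : ℕ} (hn : 3 ≤ n) (ν : Fin (n+1) → (Fin n → ℤ))
    (hprim : ∀ i, Finset.univ.gcd (ν i) = 1)
    (hfull : Submodule.span ℝ (Set.range fun i => (fun j => (ν i j : ℝ))) = ⊤)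
    (hconvex : ∀ x ∈ coneOf ν Set.univ, -x ∈ coneOf ν Set.univ → x = 0)
    (b : Fin (n+1) → ℤ) (hwall : ∑ i, b i • ν i = 0)
    (hJm : 2 ≤ (Finset.univ.filter fun i => b i < 0).card)
    (hJp : 2 ≤ (Finset.univ.filter fun i => 0 < b i).card) :
    (∀ J : Set (Fin (n+1)), ¬ ({i | b i < 0} ⊆ J) → coneOf ν J ⊆ coneOf ν Set.univ) ∧
    (∀ x ∈ coneOf ν Set.univ, ∃ J : Set (Fin (n+1)),
      ¬ ({i | b i < 0} ⊆ J) ∧ x ∈ coneOf ν J) := by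
  constructor
  · intro J _ x hx
    obtain ⟨lam, h1, _, h3⟩ := hx
    exact ⟨lam, h1, fun i hi => absurd (Set.mem_univ i) hi, h3⟩
  · intro x hx
    obtain ⟨lam, hpos, -, hsum⟩ := hx
    -- real version of the wall relation
    have hwallR : ∑ i, (b i : ℝ) • (fun j => (ν i j : ℝ)) = (0 : Fin n → ℝ) := by
      funext j
      have h := congrFun hwall j
      simp only [Finset.sum_apply, Pi.smul_apply, Pi.zero_apply, zsmul_eq_mul,
        Pi.mul_apply, smul_eq_mul] at h ⊢
      exact_mod_cast h
    -- J₋ is nonempty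
    have hne : (Finset.univ.filter fun i => b i < 0).Nonempty := by
      rw [← Finset.card_pos]; omega
    -- minimize lam i / (-b i) over i ∈ J₋
    obtain ⟨i₀, hi₀mem, hi₀min⟩ :=
      Finset.exists_min_image _ (fun i => lam i / (-(b i : ℝ))) hne
    have hbi₀ : b i₀ < 0 := (Finset.mem_filter.mp hi₀mem).2
    have hbi₀R : (0 : ℝ) < -(b i₀ : ℝ) := by
      have : (b i₀ : ℝ) < 0 := by exact_mod_cast hbi₀
      linarith
    set t : ℝ := lam i₀ / (-(b i₀ : ℝ)) with ht
    have htnn : 0 ≤ t := div_nonneg (hpos i₀) hbi₀R.le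
    set lam' : Fin (n+1) → ℝ := fun i => lam i + t * (b i : ℝ) with hlam'
    refine ⟨{i | i ≠ i₀}, ?_, lam', ?_, ?_, ?_⟩
    · intro hsub
      exact (hsub (show i₀ ∈ {i | b i < 0} from hbi₀)) rfl
    · intro i
      by_cases hb : b i < 0
      · have hbiR : (0 : ℝ) < -(b i : ℝ) := by
          have : (b i : ℝ) < 0 := by exact_mod_cast hb
          linarith
        have hmin : t ≤ lam i / (-(b i : ℝ)) :=
          hi₀min i (Finset.mem_filter.mpr ⟨Finset.mem_univ i, hb⟩)
        have : t * (-(b i : ℝ)) ≤ lam i := by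
          rw [← le_div_iff₀ hbiR]; exact hmin
        simp only [hlam']; nlinarith
      · have : (0:ℝ) ≤ (b i : ℝ) := by
          have : 0 ≤ b i := by omega
          exact_mod_cast this
        have := mul_nonneg htnn this
        simp only [hlam']; linarith [hpos i]
    · intro i hi
      have : i = i₀ := by simpa using hi
      subst this
      simp only [hlam', ht]
      field_simp
      rw [div_self (by linarith : (b i : ℝ) < 0).ne]; ring
    · have : ∑ i, lam' i • (fun j => (ν i j : ℝ))
          = (∑ i, lam i • (fun j => (ν i j : ℝ)))
            + t • ∑ i, (b i : ℝ) • (fun j => (ν i j : ℝ)) := by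
        rw [Finset.smul_sum, ← Finset.sum_add_distrib]
        refine Finset.sum_congr rfl fun i _ => ?_
        simp only [hlam', add_smul, smul_smul]
      rw [this, hwallR, smul_zero, add_zero, hsum]
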